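/- Let 1 ≤ p < q ≤ ∞ and r = 1/p − 1/q. For any x ∈ ℝ^m and k < m, the best k-term approximation error satisfies ‖x − x_k‖_q ≤ k^{−r} ‖x‖_p, where x_k keeps the k largest (in absolute value) coordinates of x and sets the rest to zero. -/

import Mathlib

open scoped ENNReal

lemma exists_top_k {m : ℕ} (k : ℕ) (hkm : k ≤ m) (f : Fin m → ℝ) :
    ∃ T : Finset (Fin m), T.card = k ∧ ∀ i ∉ T, ∀ j ∈ T, f i ≤ f j := by
  obtain ⟨T0, hT0sub, hT0card⟩ := Finset.exists_subset_card_eq (s := (Finset.univ : Finset (Fin m)))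
    (by simpa using hkm)
  obtain ⟨T, hTmem, hmax⟩ := Finset.exists_max_image (Finset.univ.powersetCard k)
    (fun T => ∑ j ∈ T, f j) ⟨T0, Finset.mem_powersetCard.2 ⟨hT0sub, hT0card⟩⟩
  obtain ⟨-, hTcard⟩ := Finset.mem_powersetCard.1 hTmem
  refine ⟨T, hTcard, fun i hi j hj => ?_⟩
  have hij : i ≠ j := fun h => hi (h ▸ hj)
  have hinotin : i ∉ T.erase j := fun h => hi (Finset.mem_of_mem_erase h)
  have hcard' : (insert i (T.erase j)).card = k := by
    have hk1 : 0 < k := hTcard ▸ Finset.card_pos.2 ⟨j, hj⟩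
    rw [Finset.card_insert_of_notMem hinotin, Finset.card_erase_of_mem hj, hTcard]
    omega
  have h := hmax (insert i (T.erase j)) (Finset.mem_powersetCard.2 ⟨Finset.subset_univ _, hcard'⟩)
  rw [Finset.sum_insert hinotin, Finset.sum_erase_eq_sub hj] at h
  linarith

theorem best_k_term_approximation (m k : ℕ) (hk : 1 ≤ k) (hkm : k < m)
    (p q : ℝ≥0∞) [Fact (1 ≤ p)] [Fact (1 ≤ q)] (hpq : p < q)
    (r : ℝ) (hr : r = 1 / p.toReal - 1 / q.toReal)
    (x xk : Fin m → ℝ)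
    (hxk_sparse : ∃ s : Finset (Fin m), s.card ≤ k ∧ ∀ j ∉ s, xk j = 0)
    (hxk_best : ∀ x' : Fin m → ℝ,
      (∃ s : Finset (Fin m), s.card ≤ k ∧ ∀ j ∉ s, x' j = 0) →
      ‖(WithLp.equiv q (Fin m → ℝ)).symm (x - xk)‖
        ≤ ‖(WithLp.equiv q (Fin m → ℝ)).symm (x - x')‖) :
    ‖(WithLp.equiv q (Fin m → ℝ)).symm (x - xk)‖
      ≤ (k : ℝ) ^ (-r) * ‖(WithLp.equiv p (Fin m → ℝ)).symm x‖ := by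
  classical
  -- basic facts about p
  have hp1 : 1 ≤ p := Fact.out
  have hpt : p ≠ ⊤ := (hpq.trans_le le_top).ne
  set P := p.toReal with hPdef
  have hP1 : 1 ≤ P := by
    rw [← ENNReal.toReal_one]
    exact ENNReal.toReal_mono hpt hp1
  have hP0 : 0 < P := lt_of_lt_of_le one_pos hP1
  have hk0 : (0:ℝ) < (k:ℝ) := by exact_mod_cast hk
  -- the ℓ^p norm of x
  set N : ℝ := ∑ i, |x i| ^ P with hNdef
  have hNterm : ∀ i, (0:ℝ) ≤ |x i| ^ P := fun i => Real.rpow_nonneg (abs_nonneg _) _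
  have hN0 : 0 ≤ N := Finset.sum_nonneg fun i _ => hNterm i
  have hnormx : ‖(WithLp.equiv p (Fin m → ℝ)).symm x‖ = N ^ (1 / P) := by
    rw [PiLp.norm_eq_sum (by positivity : 0 < p.toReal)]
    simp [Real.norm_eq_abs, hNdef]
    rfl
  -- choose the top-k set
  obtain ⟨T, hTcard, hTtop⟩ := exists_top_k k hkm.le (fun i => |x i| ^ P)
  have hsumT : ∑ j ∈ T, |x j| ^ P ≤ N := by
    apply Finset.sum_le_sum_of_subset_of_nonneg (Finset.subset_univ T)
    exact fun i _ _ => hNterm i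
  have hkey : ∀ i ∉ T, |x i| ^ P ≤ N / k := by
    intro i hi
    have h1 : (k:ℝ) * (|x i| ^ P) ≤ ∑ j ∈ T, |x j| ^ P := by
      calc (k:ℝ) * (|x i| ^ P) = ∑ _j ∈ T, |x i| ^ P := by
            rw [Finset.sum_const, hTcard, nsmul_eq_mul]
        _ ≤ ∑ j ∈ T, |x j| ^ P := Finset.sum_le_sum fun j hj => hTtop i hi j hj
    rw [le_div_iff₀ hk0]
    linarith
  have hkeyabs : ∀ i ∉ T, |x i| ≤ (N / k) ^ (1 / P) := by
    intro i hi
    have := Real.rpow_le_rpow (hNterm i) (hkey i hi) (by positivity : (0:ℝ) ≤ 1/P)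
    rwa [← Real.rpow_mul (abs_nonneg _), mul_one_div, div_self hP0.ne', Real.rpow_one] at this
  -- the competitor
  set x' : Fin m → ℝ := fun j => if j ∈ T then x j else 0 with hx'def
  have hx'sparse : ∃ s : Finset (Fin m), s.card ≤ k ∧ ∀ j ∉ s, x' j = 0 :=
    ⟨T, hTcard.le, fun j hj => by simp [hx'def, hj]⟩
  have hbest := hxk_best x' hx'sparse
  have hy : ∀ i, (x - x') i = if i ∈ T then 0 else x i := by
    intro i; by_cases hi : i ∈ T <;> simp [hx'def, hi]
  refine hbest.trans ?_
  rw [hnormx]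
  -- degenerate case N = 0
  rcases eq_or_lt_of_le hN0 with hN | hNpos
  · have hx0 : x = 0 := by
      funext i
      have h0 : |x i| ^ P = 0 :=
        (Finset.sum_eq_zero_iff_of_nonneg (fun i _ => hNterm i)).1 hN.symm i (Finset.mem_univ i)
      by_contra hxi
      exact absurd h0 (ne_of_gt (Real.rpow_pos_of_pos (abs_pos.2 hxi) _))
    have hx'0 : x' = 0 := by funext j; simp [hx'def, hx0]
    rw [hx0, hx'0, sub_zero]
    rw [← hN, Real.zero_rpow (by positivity : 1/P ≠ 0), mul_zero]
    simp
  rcases eq_or_ne q ⊤ with hq | hq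
  · -- q = ∞
    subst hq
    have hrP : r = 1 / P := by simp [hr, hPdef]
    have hRHS : (N / k) ^ (1 / P) = (k:ℝ) ^ (-r) * N ^ (1 / P) := by
      rw [hrP, Real.div_rpow hN0 hk0.le, div_eq_mul_inv, ← Real.rpow_neg hk0.le]
      ring
    have hbd : ∀ i, ‖((WithLp.equiv ⊤ (Fin m → ℝ)).symm (x - x')) i‖ ≤ (N / k) ^ (1 / P) := by
      intro i
      rw [WithLp.equiv_symm_apply, PiLp.toLp_apply, hy i, Real.norm_eq_abs]
      by_cases hi : i ∈ T
      · simp only [hi, if_true, abs_zero]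
        positivity
      · simpa [hi] using hkeyabs i hi
    have : ‖(WithLp.equiv ⊤ (Fin m → ℝ)).symm (x - x')‖ ≤ (N / k) ^ (1 / P) := by
      rw [PiLp.norm_eq_ciSup]
      have : Nonempty (Fin m) := ⟨⟨0, by omega⟩⟩
      exact ciSup_le hbd
    rw [hRHS] at this
    exact this
  · -- q < ∞
    set Q := q.toReal with hQdef
    have hqt : q ≠ ⊤ := hq
    have hPQ : P < Q := by
      rw [hPdef, hQdef]
      exact (ENNReal.toReal_lt_toReal hpt hqt).2 hpq
    have hQ0 : 0 < Q := hP0.trans hPQ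
    set E : ℝ := (Q - P) / P with hEdef
    have hE0 : 0 ≤ E := div_nonneg (by linarith) hP0.le
    have hC0 : (0:ℝ) ≤ (N / k) ^ E := Real.rpow_nonneg (by positivity) _
    have hterm : ∀ i, |(x - x') i| ^ Q ≤ (N / k) ^ E * |x i| ^ P := by
      intro i
      rw [hy i]
      by_cases hi : i ∈ T
      · simp only [hi, if_true, abs_zero, Real.zero_rpow hQ0.ne']
        positivity
      · simp only [hi, if_false]
        have hQPP : (Q - P) + P = Q := by ring
        have hsplit : |x i| ^ Q = |x i| ^ (Q - P) * |x i| ^ P := by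
          conv_lhs => rw [← hQPP]
          exact Real.rpow_add' (abs_nonneg _) (by rw [hQPP]; exact hQ0.ne')
        have hb : |x i| ^ (Q - P) ≤ (N / k) ^ E := by
          have h1 : |x i| ^ (Q - P) ≤ ((N / k) ^ (1/P)) ^ (Q - P) :=
            Real.rpow_le_rpow (abs_nonneg _) (hkeyabs i hi) (by linarith)
          rwa [← Real.rpow_mul (by positivity : (0:ℝ) ≤ N / k),
            (by ring : 1/P * (Q - P) = E)] at h1
        calc |x i| ^ Q = |x i| ^ (Q - P) * |x i| ^ P := hsplit
          _ ≤ (N / k) ^ E * |x i| ^ P :=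
            mul_le_mul_of_nonneg_right hb (hNterm i)
    have hA : ∑ i, |(x - x') i| ^ Q ≤ (N / k) ^ E * N := by
      calc ∑ i, |(x - x') i| ^ Q ≤ ∑ i, (N / k) ^ E * |x i| ^ P :=
            Finset.sum_le_sum fun i _ => hterm i
        _ = (N / k) ^ E * N := by rw [← Finset.mul_sum]
    have hA0 : 0 ≤ ∑ i, |(x - x') i| ^ Q :=
      Finset.sum_nonneg fun i _ => Real.rpow_nonneg (abs_nonneg _) _
    have hnorm : ‖(WithLp.equiv q (Fin m → ℝ)).symm (x - x')‖
        = (∑ i, |(x - x') i| ^ Q) ^ (1/Q) := by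
      rw [PiLp.norm_eq_sum hQ0]
      simp [Real.norm_eq_abs]
      rfl
    have heq : ((N / k) ^ E * N) ^ (1/Q) = (k:ℝ) ^ (-r) * N ^ (1/P) := by
      have e1 : (E + 1) * (1/Q) = 1/P := by
        rw [hEdef]; field_simp; ring
      have e2 : (-E) * (1/Q) = -r := by
        rw [hEdef, hr]; field_simp
      rw [Real.div_rpow hN0 hk0.le, div_eq_mul_inv, ← Real.rpow_neg hk0.le,
        mul_assoc, mul_comm ((k:ℝ) ^ (-E)) N, ← mul_assoc,
        ← Real.rpow_add_one hNpos.ne' E,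
        Real.mul_rpow (Real.rpow_nonneg hN0 _) (Real.rpow_nonneg hk0.le _),
        ← Real.rpow_mul hN0, ← Real.rpow_mul hk0.le, e1, e2, mul_comm]
    rw [hnorm, ← heq]
    exact Real.rpow_le_rpow hA0 hA (by positivity)
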